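/- arXiv:1405.3222 — 3 statements merged into one kernel-verified Lean document; each statement's English description precedes it below -/
import Mathlib

section
/- Let D and X be real matrices with the same number of columns and suppose X has full column rank. Then the minimum ℓ2-norm solution of (D X⁺)(D X⁺)ᵀ x = (D X⁺) c equals the minimum ℓ2-norm solution of D Dᵀ x = D Xᵀ d, where d = (I − P_{X·null(D)}) c and P_{X·null(D)} is the orthogonal projection onto the subspace {X v : v ∈ null(D)}. -/
open Matrix

/-- `P` is the matrix of the orthogonal projection of `ℝⁿ` onto `S`. -/
def IsOrthProjOn {n : ℕ} (P : Matrix (Fin n) (Fin n) ℝ)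
    (S : Submodule ℝ (Fin n → ℝ)) : Prop :=
  Pᵀ = P ∧ P * P = P ∧ (∀ x, P.mulVec x ∈ S) ∧ (∀ x ∈ S, P.mulVec x = x)

/-- With `X` of full column rank and `X⁺ = (XᵀX)⁻¹Xᵀ`, the minimum
ℓ2-norm solution of `(DX⁺)(DX⁺)ᵀ x = (DX⁺) c` equals the minimum ℓ2-norm
solution of `D Dᵀ x = D Xᵀ d`, where `d = (I − P_{X·null(D)}) c`. -/
theorem min_norm_sol_transformed_dual {m n p : ℕ}
    (D : Matrix (Fin m) (Fin p) ℝ) (X : Matrix (Fin n) (Fin p) ℝ)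
    (hX : X.rank = p)
    (c : Fin n → ℝ)
    (P : Matrix (Fin n) (Fin n) ℝ)
    (hP : IsOrthProjOn P
      (Submodule.map X.mulVecLin (LinearMap.ker D.mulVecLin)))
    (M : Matrix (Fin m) (Fin n) ℝ) (hM : M = D * ((Xᵀ * X)⁻¹ * Xᵀ))
    (d : Fin n → ℝ) (hd : d = c - P.mulVec c) :
    ∀ x : Fin m → ℝ,
      ((M * Mᵀ).mulVec x = M.mulVec c ∧
        ∀ y, (M * Mᵀ).mulVec y = M.mulVec c →
          ∑ i, (x i) ^ 2 ≤ ∑ i, (y i) ^ 2)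
      ↔
      ((D * Dᵀ).mulVec x = (D * Xᵀ).mulVec d ∧
        ∀ y, (D * Dᵀ).mulVec y = (D * Xᵀ).mulVec d →
          ∑ i, (x i) ^ 2 ≤ ∑ i, (y i) ^ 2) := by
  obtain ⟨hPsymm, hPidem, hPmem, hPfix⟩ := hP
  obtain ⟨w, hw, hXw⟩ := hPmem c
  simp only [SetLike.mem_coe, LinearMap.mem_ker, mulVecLin_apply] at hw
  rw [mulVecLin_apply] at hXw
  -- X has trivial kernel
  have hker : ∀ v : Fin p → ℝ, X.mulVec v = 0 → v = 0 := by
    have h0 : Module.finrank ℝ (LinearMap.range X.mulVecLin) +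
        Module.finrank ℝ (LinearMap.ker X.mulVecLin) = p := by
      rw [X.mulVecLin.finrank_range_add_finrank_ker]
      simp
    have h1 : Module.finrank ℝ (LinearMap.ker X.mulVecLin) = 0 := by
      have : X.rank = Module.finrank ℝ (LinearMap.range X.mulVecLin) := rfl
      omega
    have h2 : LinearMap.ker X.mulVecLin = ⊥ :=
      Submodule.finrank_eq_zero.mp h1
    intro v hv
    have : v ∈ LinearMap.ker X.mulVecLin := by
      rw [LinearMap.mem_ker, mulVecLin_apply]; exact hv
    rw [h2, Submodule.mem_bot] at this
    exact this
  -- self-dot-product lemma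
  have hself : ∀ v : Fin p → ℝ, ((Xᵀ * X).mulVec v) ⬝ᵥ v = (X.mulVec v) ⬝ᵥ (X.mulVec v) := by
    intro v
    rw [← mulVec_mulVec, dotProduct_mulVec, ← mulVec_transpose]
  -- XᵀX invertible
  have hdet : IsUnit (Xᵀ * X).det := by
    rw [isUnit_iff_ne_zero]
    intro h0
    obtain ⟨v, hv, hv0⟩ := (Matrix.exists_mulVec_eq_zero_iff).mpr h0
    have : (X.mulVec v) ⬝ᵥ (X.mulVec v) = 0 := by
      rw [← hself, hv0, zero_dotProduct]
    rw [dotProduct_self_eq_zero] at this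
    exact hv (hker v this)
  have hGr : (Xᵀ * X) * (Xᵀ * X)⁻¹ = 1 := mul_nonsing_inv _ hdet
  have hGl : (Xᵀ * X)⁻¹ * (Xᵀ * X) = 1 := nonsing_inv_mul _ hdet
  have hGsymm : ((Xᵀ * X)⁻¹)ᵀ = (Xᵀ * X)⁻¹ := by
    rw [transpose_nonsing_inv, transpose_mul, transpose_transpose]
  set G := (Xᵀ * X)⁻¹ with hG
  -- key orthogonality facts
  have L0 : ∀ k : Fin p → ℝ, D.mulVec k = 0 → (Xᵀ.mulVec d) ⬝ᵥ k = 0 := by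
    intro k hk
    have hXkS : X.mulVec k ∈ Submodule.map X.mulVecLin (LinearMap.ker D.mulVecLin) :=
      ⟨k, by simp only [SetLike.mem_coe, LinearMap.mem_ker, mulVecLin_apply]; exact hk,
        by rw [mulVecLin_apply]⟩
    have hfix : P.mulVec (X.mulVec k) = X.mulVec k := hPfix _ hXkS
    have h1 : (Xᵀ.mulVec d) ⬝ᵥ k = d ⬝ᵥ (X.mulVec k) := by
      rw [dotProduct_mulVec, mulVec_transpose]
    have h2 : (P.mulVec c) ⬝ᵥ (X.mulVec k) = c ⬝ᵥ (X.mulVec k) := by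
      calc (P.mulVec c) ⬝ᵥ (X.mulVec k) = (Pᵀ.mulVec c) ⬝ᵥ (X.mulVec k) := by rw [hPsymm]
        _ = c ⬝ᵥ (P.mulVec (X.mulVec k)) := by
            rw [mulVec_transpose, ← dotProduct_mulVec]
        _ = c ⬝ᵥ (X.mulVec k) := by rw [hfix]
    rw [h1, hd, sub_dotProduct, h2, sub_self]
  have L1 : ∀ (z : Fin m → ℝ) (k : Fin p → ℝ), D.mulVec k = 0 →
      (Dᵀ.mulVec z) ⬝ᵥ k = 0 := by
    intro z k hk
    rw [mulVec_transpose, ← dotProduct_mulVec, hk, dotProduct_zero]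
  -- second system equivalence
  have key2 : ∀ z : Fin m → ℝ,
      (D * Dᵀ).mulVec z = (D * Xᵀ).mulVec d ↔ Dᵀ.mulVec z = Xᵀ.mulVec d := by
    intro z
    constructor
    · intro h
      set k := Dᵀ.mulVec z - Xᵀ.mulVec d with hkdef
      have hk : D.mulVec k = 0 := by
        rw [hkdef, mulVec_sub, mulVec_mulVec, mulVec_mulVec, h, sub_self]
      have hkk : k ⬝ᵥ k = 0 := by
        rw [hkdef, sub_dotProduct, L1 z _ hk, L0 _ hk, sub_self]
      have := dotProduct_self_eq_zero.mp hkk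
      rw [hkdef, sub_eq_zero] at this
      exact this
    · intro h
      rw [← mulVec_mulVec, ← mulVec_mulVec, h]
  -- first system equivalence
  have hMT : Mᵀ = X * (G * Dᵀ) := by
    rw [hM]
    simp [transpose_mul, hGsymm, Matrix.mul_assoc]
  have key1 : ∀ z : Fin m → ℝ,
      (M * Mᵀ).mulVec z = M.mulVec c ↔ Dᵀ.mulVec z = Xᵀ.mulVec d := by
    intro z
    have hXtd : Xᵀ.mulVec d = Xᵀ.mulVec c - (Xᵀ * X).mulVec w := by
      rw [hd, mulVec_sub, ← hXw, mulVec_mulVec]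
    have hMMT : M * Mᵀ = D * (G * Dᵀ) := by
      rw [hMT, hM]
      rw [show D * (G * Xᵀ) * (X * (G * Dᵀ)) = D * (G * ((Xᵀ * X * G) * Dᵀ)) by
        simp only [Matrix.mul_assoc]]
      rw [hGr, Matrix.one_mul]
    have hMM : (M * Mᵀ).mulVec z = D.mulVec (G.mulVec (Dᵀ.mulVec z)) := by
      rw [hMMT, ← mulVec_mulVec, ← mulVec_mulVec]
    have hMc : M.mulVec c = D.mulVec (G.mulVec (Xᵀ.mulVec c)) := by
      rw [hM, ← mulVec_mulVec, ← mulVec_mulVec]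
    constructor
    · intro h
      set k := G.mulVec (Dᵀ.mulVec z - Xᵀ.mulVec d) with hkdef
      have hGXXw : G.mulVec ((Xᵀ * X).mulVec w) = w := by
        rw [mulVec_mulVec, hGl, one_mulVec]
      have hk : D.mulVec k = 0 := by
        have : D.mulVec (G.mulVec (Dᵀ.mulVec z)) - D.mulVec (G.mulVec (Xᵀ.mulVec c)) = 0 := by
          rw [← hMM, ← hMc, h, sub_self]
        have h2 : D.mulVec k = D.mulVec (G.mulVec (Dᵀ.mulVec z))
            - D.mulVec (G.mulVec (Xᵀ.mulVec c)) + D.mulVec w := by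
          rw [hkdef, hXtd]
          rw [show Dᵀ.mulVec z - (Xᵀ.mulVec c - (Xᵀ * X).mulVec w)
              = (Dᵀ.mulVec z - Xᵀ.mulVec c) + (Xᵀ * X).mulVec w by abel]
          rw [mulVec_add, hGXXw, mulVec_add, mulVec_sub, mulVec_sub]
        rw [h2, this, hw, zero_add]
      -- Dᵀz - Xᵀd = (XᵀX) k
      have hXXk : Dᵀ.mulVec z - Xᵀ.mulVec d = (Xᵀ * X).mulVec k := by
        rw [hkdef, mulVec_mulVec, hGr, one_mulVec]
      have hdot : ((Xᵀ * X).mulVec k) ⬝ᵥ k = 0 := by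
        rw [← hXXk, sub_dotProduct, L1 z _ hk, L0 _ hk, sub_self]
      rw [hself] at hdot
      have hXk : X.mulVec k = 0 := dotProduct_self_eq_zero.mp hdot
      have : (Xᵀ * X).mulVec k = 0 := by
        rw [← mulVec_mulVec, hXk, mulVec_zero]
      rw [this] at hXXk
      rw [sub_eq_zero] at hXXk
      exact hXXk
    · intro h
      rw [hMM, hMc, h, hXtd, mulVec_sub]
      have hGXXw : G.mulVec ((Xᵀ * X).mulVec w) = w := by
        rw [mulVec_mulVec, hGl, one_mulVec]
      rw [hGXXw, mulVec_sub, hw, sub_zero]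
  intro x
  constructor
  · rintro ⟨h1, h2⟩
    refine ⟨(key2 x).mpr ((key1 x).mp h1), fun y hy => h2 y ((key1 y).mpr ((key2 y).mp hy))⟩
  · rintro ⟨h1, h2⟩
    refine ⟨(key1 x).mpr ((key2 x).mp h1), fun y hy => h2 y ((key2 y).mpr ((key1 y).mp hy))⟩
end

section
/- If X ∈ ℝ^{n×p} has full column rank and D ∈ ℝ^{m×p}, then the null space of D X⁺ decomposes as the orthogonal direct sum null(D X⁺) = null(Xᵀ) ⊕ X·null(D), where X·null(D) = {X v : v ∈ null(D)}. -/
open Matrix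

/-- If `X` has full column rank (so `X⁺ = (XᵀX)⁻¹Xᵀ`) and `D` is
arbitrary, then `null(D X⁺)` decomposes as the orthogonal direct sum
`null(Xᵀ) ⊕ X·null(D)`. -/
theorem kernel_DXpinv_decomposition {m n p : ℕ}
    (D : Matrix (Fin m) (Fin p) ℝ) (X : Matrix (Fin n) (Fin p) ℝ)
    (hX : X.rank = p) :
    LinearMap.ker (D * ((Xᵀ * X)⁻¹ * Xᵀ)).mulVecLin
      = LinearMap.ker (Xᵀ).mulVecLin
          ⊔ Submodule.map X.mulVecLin (LinearMap.ker D.mulVecLin) ∧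
    (∀ u ∈ LinearMap.ker (Xᵀ).mulVecLin,
      ∀ w ∈ Submodule.map X.mulVecLin (LinearMap.ker D.mulVecLin),
        ∑ i, u i * w i = 0) := by
  classical
  -- X has trivial kernel
  have hXker : LinearMap.ker X.mulVecLin = ⊥ := by
    have h1 := LinearMap.finrank_range_add_finrank_ker X.mulVecLin
    rw [Module.finrank_pi] at h1
    have h2 : X.rank = Module.finrank ℝ (LinearMap.range X.mulVecLin) := rfl
    rw [← h2, hX, Fintype.card_fin] at h1
    have h3 : Module.finrank ℝ (LinearMap.ker X.mulVecLin) = 0 := by omega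
    exact Submodule.finrank_eq_zero.mp h3
  -- XᵀX is invertible
  have hker' : LinearMap.ker (Xᵀ * X).mulVecLin = ⊥ :=
    (ker_mulVecLin_transpose_mul_self X).trans hXker
  have hUnit : IsUnit (Xᵀ * X) := by
    rw [← Matrix.mulVec_injective_iff_isUnit]
    intro a b hab
    have : (Xᵀ * X).mulVecLin a = (Xᵀ * X).mulVecLin b := hab
    exact LinearMap.ker_eq_bot.mp hker' this
  have hdet : IsUnit (Xᵀ * X).det := (Matrix.isUnit_iff_isUnit_det _).mp hUnit
  have hinvmul : (Xᵀ * X)⁻¹ * (Xᵀ * X) = 1 := Matrix.nonsing_inv_mul _ hdet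
  have hmulinv : (Xᵀ * X) * (Xᵀ * X)⁻¹ = 1 := Matrix.mul_nonsing_inv _ hdet
  constructor
  · apply le_antisymm
    · intro y hy
      rw [LinearMap.mem_ker, mulVecLin_apply] at hy
      set v : Fin p → ℝ := ((Xᵀ * X)⁻¹ * Xᵀ) *ᵥ y with hv
      have hDv : D *ᵥ v = 0 := by
        rw [hv, mulVec_mulVec]
        exact hy
      have hu : Xᵀ *ᵥ (y - X *ᵥ v) = 0 := by
        have hmat : Xᵀ * X * ((Xᵀ * X)⁻¹ * Xᵀ) = Xᵀ := by
          rw [← Matrix.mul_assoc, hmulinv, Matrix.one_mul]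
        have : Xᵀ *ᵥ (X *ᵥ v) = Xᵀ *ᵥ y := by
          rw [hv, mulVec_mulVec, mulVec_mulVec, hmat]
        rw [mulVec_sub, this, sub_self]
      have hmem1 : (y - X *ᵥ v) ∈ LinearMap.ker (Xᵀ).mulVecLin := hu
      have hmem2 : X *ᵥ v ∈ Submodule.map X.mulVecLin (LinearMap.ker D.mulVecLin) :=
        ⟨v, hDv, rfl⟩
      have : y = (y - X *ᵥ v) + X *ᵥ v := by ring_nf
      rw [this]
      exact Submodule.add_mem_sup hmem1 hmem2
    · rw [sup_le_iff]
      constructor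
      · intro u hu
        simp only [LinearMap.mem_ker, mulVecLin_apply] at hu ⊢
        rw [← mulVec_mulVec, ← mulVec_mulVec, hu, mulVec_zero, mulVec_zero]
      · rintro w ⟨v, hv, rfl⟩
        simp only [SetLike.mem_coe, LinearMap.mem_ker, mulVecLin_apply] at hv ⊢
        have hmat : (D * ((Xᵀ * X)⁻¹ * Xᵀ)) * X = D := by
          rw [Matrix.mul_assoc, Matrix.mul_assoc, hinvmul, Matrix.mul_one]
        rw [mulVec_mulVec, hmat, hv]
  · rintro u hu w ⟨v, hv, rfl⟩
    rw [LinearMap.mem_ker, mulVecLin_apply] at hu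
    have : u ⬝ᵥ (X *ᵥ v) = (u ᵥ* X) ⬝ᵥ v := dotProduct_mulVec u X v
    rw [← Matrix.mulVec_transpose, hu, zero_dotProduct] at this
    simpa [dotProduct, mulVecLin_apply] using this
end

section
/- The orthogonal projection onto the orthogonal complement of col(X) plus the orthogonal projection onto X·null(D) equals the orthogonal projection onto null(D X⁺), when X has full column rank: P_{null(DX⁺)} = P_{null(Xᵀ)} + P_{X·null(D)}. -/
open Matrix

section Helpers

variable {n : ℕ} {S : Submodule ℝ (Fin n → ℝ)} {P Q : Matrix (Fin n) (Fin n) ℝ}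

lemma mulVec_ext {A B : Matrix (Fin n) (Fin n) ℝ}
    (h : ∀ x, A *ᵥ x = B *ᵥ x) : A = B := by
  ext i j
  have := h (Pi.single j 1)
  rw [mulVec_single_one, mulVec_single_one] at this
  exact congrFun this i

lemma proj_dot (hP : IsOrthProjOn P S) (x y : Fin n → ℝ) :
    (P *ᵥ x) ⬝ᵥ y = x ⬝ᵥ (P *ᵥ y) := by
  conv_rhs => rw [← hP.1]
  rw [dotProduct_mulVec, vecMul_transpose]

lemma proj_zero_of_orth (hP : IsOrthProjOn P S) (y : Fin n → ℝ)
    (hy : ∀ s ∈ S, s ⬝ᵥ y = 0) : P *ᵥ y = 0 := by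
  have hs : P *ᵥ y ∈ S := hP.2.2.1 y
  have h1 : (P *ᵥ y) ⬝ᵥ (P *ᵥ y) = 0 := by
    rw [proj_dot hP, hP.2.2.2 _ hs, dotProduct_comm]
    exact hy _ hs
  exact dotProduct_self_eq_zero.mp h1

lemma orthProj_unique (hP : IsOrthProjOn P S) (hQ : IsOrthProjOn Q S) :
    P = Q := by
  apply mulVec_ext
  intro x
  have hd : P *ᵥ x - Q *ᵥ x ∈ S := S.sub_mem (hP.2.2.1 x) (hQ.2.2.1 x)
  set d := P *ᵥ x - Q *ᵥ x with hdd
  have h1 : (P *ᵥ x) ⬝ᵥ d = x ⬝ᵥ d := by rw [proj_dot hP, hP.2.2.2 d hd]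
  have h2 : (Q *ᵥ x) ⬝ᵥ d = x ⬝ᵥ d := by rw [proj_dot hQ, hQ.2.2.2 d hd]
  have h3 : d ⬝ᵥ d = 0 := by
    rw [hdd, sub_dotProduct, h1, h2, sub_self]
  exact sub_eq_zero.mp (dotProduct_self_eq_zero.mp h3)

end Helpers

/-- When `X` has full column rank (so `X⁺ = (XᵀX)⁻¹Xᵀ`), the
orthogonal projection onto `null(D X⁺)` equals the sum of the orthogonal
projections onto `null(Xᵀ) = col(X)^⊥` and onto `X·null(D)`:
`P_{null(DX⁺)} = P_{null(Xᵀ)} + P_{X·null(D)}`. -/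
theorem proj_null_DXpinv_sum {m n p : ℕ}
    (D : Matrix (Fin m) (Fin p) ℝ) (X : Matrix (Fin n) (Fin p) ℝ)
    (hX : X.rank = p)
    (P₁ P₂ P₃ : Matrix (Fin n) (Fin n) ℝ)
    (hP₁ : IsOrthProjOn P₁
      (LinearMap.ker (D * ((Xᵀ * X)⁻¹ * Xᵀ)).mulVecLin))
    (hP₂ : IsOrthProjOn P₂ (LinearMap.ker (Xᵀ).mulVecLin))
    (hP₃ : IsOrthProjOn P₃
      (Submodule.map X.mulVecLin (LinearMap.ker D.mulVecLin))) :
    P₁ = P₂ + P₃ := by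
  set S₁ := LinearMap.ker (D * ((Xᵀ * X)⁻¹ * Xᵀ)).mulVecLin with hS₁
  set S₂ := LinearMap.ker (Xᵀ).mulVecLin with hS₂
  set S₃ := Submodule.map X.mulVecLin (LinearMap.ker D.mulVecLin) with hS₃
  -- X has trivial kernel
  have hkerX : LinearMap.ker X.mulVecLin = ⊥ := by
    have hrn := X.mulVecLin.finrank_range_add_finrank_ker
    rw [Module.finrank_fin_fun] at hrn
    have : Module.finrank ℝ (LinearMap.ker X.mulVecLin) = 0 := by
      have : X.rank + Module.finrank ℝ (LinearMap.ker X.mulVecLin) = p := hrn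
      omega
    exact Submodule.finrank_eq_zero.mp this
  -- XᵀX is invertible
  have hkerXtX : LinearMap.ker (Xᵀ * X).mulVecLin = ⊥ := by
    rw [Matrix.ker_mulVecLin_transpose_mul_self]; exact hkerX
  have hunit : IsUnit (Xᵀ * X).det := by
    rw [← Matrix.isUnit_iff_isUnit_det, ← Matrix.mulVec_injective_iff_isUnit]
    intro a b hab
    have : (Xᵀ * X) *ᵥ (a - b) = 0 := by
      rw [mulVec_sub, hab, sub_self]
    have := Matrix.ker_mulVecLin_eq_bot_iff.mp hkerXtX _ this
    exact sub_eq_zero.mp this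
  have hinvmul : (Xᵀ * X)⁻¹ * (Xᵀ * X) = 1 := Matrix.nonsing_inv_mul _ hunit
  have hmulinv : (Xᵀ * X) * (Xᵀ * X)⁻¹ = 1 := Matrix.mul_nonsing_inv _ hunit
  -- orthogonality of S₂ and S₃
  have horth : ∀ u ∈ S₂, ∀ v ∈ S₃, u ⬝ᵥ v = 0 := by
    rintro u hu v ⟨w, hw, rfl⟩
    have hu' : Xᵀ *ᵥ u = 0 := hu
    show u ⬝ᵥ (X *ᵥ w) = 0
    rw [dotProduct_mulVec, ← mulVec_transpose, hu', zero_dotProduct]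
  -- cross projections vanish
  have h23 : ∀ x, P₂ *ᵥ (P₃ *ᵥ x) = 0 := fun x =>
    proj_zero_of_orth hP₂ _ (fun s hs => horth s hs _ (hP₃.2.2.1 x))
  have h32 : ∀ x, P₃ *ᵥ (P₂ *ᵥ x) = 0 := fun x =>
    proj_zero_of_orth hP₃ _ (fun s hs => by
      rw [dotProduct_comm]; exact horth _ (hP₂.2.2.1 x) s hs)
  -- S₂ ⊆ S₁
  have hS21 : S₂ ≤ S₁ := by
    intro u hu
    have hu' : Xᵀ *ᵥ u = 0 := hu
    show (D * ((Xᵀ * X)⁻¹ * Xᵀ)) *ᵥ u = 0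
    rw [← mulVec_mulVec, ← mulVec_mulVec, hu', mulVec_zero, mulVec_zero]
  -- S₃ ⊆ S₁
  have hS31 : S₃ ≤ S₁ := by
    rintro v ⟨w, hw, rfl⟩
    have hw' : D *ᵥ w = 0 := hw
    show (D * ((Xᵀ * X)⁻¹ * Xᵀ)) *ᵥ (X *ᵥ w) = 0
    rw [mulVec_mulVec, Matrix.mul_assoc D, Matrix.mul_assoc _ Xᵀ X, hinvmul,
      Matrix.mul_one, hw']
  -- P₂ + P₃ is an orthogonal projection onto S₁
  have hsum : IsOrthProjOn (P₂ + P₃) S₁ := by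
    refine ⟨?_, ?_, ?_, ?_⟩
    · rw [transpose_add, hP₂.1, hP₃.1]
    · have e23 : P₂ * P₃ = 0 := mulVec_ext fun x => by
        rw [← mulVec_mulVec, h23, zero_mulVec]
      have e32 : P₃ * P₂ = 0 := mulVec_ext fun x => by
        rw [← mulVec_mulVec, h32, zero_mulVec]
      rw [add_mul, mul_add, mul_add, hP₂.2.1, hP₃.2.1, e23, e32, add_zero,
        zero_add]
    · intro x
      rw [Matrix.add_mulVec]
      exact S₁.add_mem (hS21 (hP₂.2.2.1 x)) (hS31 (hP₃.2.2.1 x))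
    · intro x hx
      have hx' : (D * ((Xᵀ * X)⁻¹ * Xᵀ)) *ᵥ x = 0 := hx
      let w : Fin p → ℝ := (Xᵀ * X)⁻¹ *ᵥ (Xᵀ *ᵥ x)
      have hDw : D *ᵥ w = 0 := by
        show D *ᵥ ((Xᵀ * X)⁻¹ *ᵥ (Xᵀ *ᵥ x)) = 0
        rw [mulVec_mulVec, mulVec_mulVec, Matrix.mul_assoc]
        exact hx'
      have hXw3 : X *ᵥ w ∈ S₃ := Submodule.mem_map.mpr ⟨w, hDw, rfl⟩
      -- y := x - P₂ x equals X w
      have hXtP2 : Xᵀ *ᵥ (P₂ *ᵥ x) = 0 := hP₂.2.2.1 x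
      have hXty : Xᵀ *ᵥ (x - P₂ *ᵥ x) = Xᵀ *ᵥ x := by
        rw [mulVec_sub, hXtP2, sub_zero]
      have hXtXw : Xᵀ *ᵥ (X *ᵥ w) = Xᵀ *ᵥ x := by
        show Xᵀ *ᵥ (X *ᵥ ((Xᵀ * X)⁻¹ *ᵥ (Xᵀ *ᵥ x))) = Xᵀ *ᵥ x
        rw [mulVec_mulVec, mulVec_mulVec, mulVec_mulVec, hmulinv,
          Matrix.one_mul]
      have hd2 : (x - P₂ *ᵥ x) - X *ᵥ w ∈ S₂ := by
        show Xᵀ *ᵥ ((x - P₂ *ᵥ x) - X *ᵥ w) = 0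
        rw [mulVec_sub, hXty, hXtXw, sub_self]
      have hyorth : ∀ s ∈ S₂, (x - P₂ *ᵥ x) ⬝ᵥ s = 0 := by
        intro s hs
        rw [sub_dotProduct, dotProduct_comm (P₂ *ᵥ x) s, dotProduct_comm x s,
          ← proj_dot hP₂ s x, hP₂.2.2.2 s hs, sub_self]
      have hXworth : ∀ s ∈ S₂, (X *ᵥ w) ⬝ᵥ s = 0 := fun s hs => by
        rw [dotProduct_comm]; exact horth s hs _ hXw3
      have hdd : ((x - P₂ *ᵥ x) - X *ᵥ w) ⬝ᵥ ((x - P₂ *ᵥ x) - X *ᵥ w) = 0 := by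
        rw [sub_dotProduct, hyorth _ hd2, hXworth _ hd2, sub_self]
      have hy : x - P₂ *ᵥ x = X *ᵥ w :=
        sub_eq_zero.mp (dotProduct_self_eq_zero.mp hdd)
      have hP3y : P₃ *ᵥ (X *ᵥ w) = X *ᵥ w := hP₃.2.2.2 _ hXw3
      have hP3x : P₃ *ᵥ x = X *ᵥ w := by
        have hx' : x = X *ᵥ w + P₂ *ᵥ x := by rw [← hy]; ring
        calc P₃ *ᵥ x = P₃ *ᵥ (X *ᵥ w + P₂ *ᵥ x) := by rw [← hx']
          _ = P₃ *ᵥ (X *ᵥ w) + P₃ *ᵥ (P₂ *ᵥ x) := by rw [mulVec_add]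
          _ = X *ᵥ w := by rw [hP3y, h32, add_zero]
      rw [Matrix.add_mulVec, hP3x, ← hy]
      ring
  exact orthProj_unique hP₁ hsum
end
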